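/- arXiv:1211.1703 — 2 statements merged into one kernel-verified Lean document; each statement's English description precedes it below -/
import Mathlib

section
/- Let n ≥ 2, let c_1,…,c_n be positive integers, define d_i = 2^{n+1}·(c_i + Σ_{j=1}^n c_j) + 2^i for i ∈ [n] and d_{n+1} = 1, and let cost(R) = Σ_{i∈[n+1]∖R} d_i for R ⊆ [n+1]. Let 1 ≤ s ≤ n−1 and let k be an integer with 1 ≤ k ≤ C(n,s). Among the subsets T ⊆ [n] of size n−s (whose costs are pairwise distinct), let T* be the one with the k-th smallest cost and set c* = cost(T*). Let p ∈ [1/2, 1 − 1/(2n+2)), and for R ⊊ [n+1] set cap(R) = p^{|R|}·(1−p)^{n+1−|R|}·(2n+1 − 2|R|), and set supply = p^{n+1}. If f(p) ∈ ( k − 1/(2n+2), k ), then Σ_{R⊊[n+1]: cost(R)<c*} cap(R) < supply < Σ_{R⊊[n+1]: cost(R)≤c*} cap(R). -/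
open Finset
open scoped BigOperators Classical

/-- `d i = 2^(n+1) · (c i + Σ_{j=1}^n c j) + 2^i` for `i ∈ [n]`, and `d (n+1) = 1`. -/
def dFull (n : ℕ) (c : ℕ → ℕ) : ℕ → ℕ :=
  fun i => if i = n + 1 then 1
    else 2 ^ (n + 1) * (c i + ∑ j ∈ Finset.Icc 1 n, c j) + 2 ^ i

/-- `cost(R) = Σ_{i ∈ [n+1] ∖ R} d i`. -/
def cost (n : ℕ) (c : ℕ → ℕ) (R : Finset ℕ) : ℕ :=
  ∑ i ∈ Finset.Icc 1 (n + 1) \ R, dFull n c i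

/-- The function `f(p)` from the choice-of-parameter lemma. -/
noncomputable def ffun (n s : ℕ) (p : ℝ) : ℝ :=
  (∑ i ∈ Finset.Icc (n - s + 1) n,
      (n.choose i : ℝ) * p ^ i * (1 - p) ^ (n - i) * (2 * ((i : ℝ) + p - n) - 1)) /
    (p ^ (n - s) * (1 - p) ^ s * (2 * (s : ℝ) - 2 * p + 1))

/-- The absorption capacity `cap(R) = p^{|R|}·(1-p)^{n+1-|R|}·(2n+1-2|R|)`. -/
noncomputable def cap (n : ℕ) (p : ℝ) (R : Finset ℕ) : ℝ :=
  p ^ R.card * (1 - p) ^ (n + 1 - R.card) * (2 * (n : ℝ) + 1 - 2 * (R.card : ℝ))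

def bcst (n : ℕ) (c : ℕ → ℕ) (S : Finset ℕ) : ℕ := ∑ i ∈ S, dFull n c i

lemma dFull_eq {n : ℕ} {c : ℕ → ℕ} {i : ℕ} (hi : i ∈ Finset.Icc 1 n) :
    dFull n c i = 2 ^ (n + 1) * (c i + ∑ j ∈ Finset.Icc 1 n, c j) + 2 ^ i := by
  rw [Finset.mem_Icc] at hi
  simp only [dFull]
  rw [if_neg (by omega)]

lemma bcst_split {n : ℕ} {c : ℕ → ℕ} {S : Finset ℕ} (hS : S ⊆ Finset.Icc 1 n) :
    bcst n c S = 2 ^ (n + 1) * (∑ i ∈ S, (c i + ∑ j ∈ Finset.Icc 1 n, c j))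
      + ∑ i ∈ S, 2 ^ i := by
  rw [bcst, Finset.mul_sum, ← Finset.sum_add_distrib]
  exact Finset.sum_congr rfl fun i hi => dFull_eq (hS hi)

lemma twopow_lt {n : ℕ} {S : Finset ℕ} (hS : S ⊆ Finset.Icc 1 n) :
    ∑ i ∈ S, 2 ^ i < 2 ^ (n + 1) :=
  Nat.geomSum_lt le_rfl (fun k hk => by
    have := hS hk; rw [Finset.mem_Icc] at this; omega)

lemma bcst_even {n : ℕ} {c : ℕ → ℕ} {S : Finset ℕ} (hS : S ⊆ Finset.Icc 1 n) :
    2 ∣ bcst n c S := by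
  refine Finset.dvd_sum fun i hi => ?_
  have h := hS hi
  rw [dFull_eq h]
  rw [Finset.mem_Icc] at h
  have h1 : 2 ∣ 2 ^ i := dvd_pow_self 2 (by omega)
  have h2 : (2:ℕ) ∣ 2 ^ (n + 1) := dvd_pow_self 2 (by omega)
  exact dvd_add (h2.mul_right _) h1

lemma twopow_le {n : ℕ} {S : Finset ℕ} (hS : S ⊆ Finset.Icc 1 n) :
    ∑ i ∈ S, 2 ^ i + 2 ≤ 2 ^ (n + 1) := by
  have h1 := twopow_lt hS
  have h2 : 2 ∣ ∑ i ∈ S, 2 ^ i := by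
    refine Finset.dvd_sum fun i hi => dvd_pow_self 2 ?_
    have := hS hi; rw [Finset.mem_Icc] at this; omega
  have h3 : (2:ℕ) ∣ 2 ^ (n + 1) := dvd_pow_self 2 (by omega)
  omega

lemma bcst_lt_key (X M Sc a a' E B B' : ℕ) (hB : B = X * (Sc + a * M) + E)
    (hE : E + 2 ≤ X) (hSc : Sc ≤ M) (hB' : a' * (X * (1 + M)) ≤ B')
    (ha : a < a') : B + 1 < B' := by
  have h1 : X * Sc ≤ X * M := Nat.mul_le_mul_left X hSc
  have h2 : (a + 1) * (X * (1 + M)) ≤ a' * (X * (1 + M)) :=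
    Nat.mul_le_mul_right _ (by omega)
  nlinarith [h1, h2, hB', hB, hE]

lemma bcst_lt {n : ℕ} {c : ℕ → ℕ} {S S' : Finset ℕ}
    (hc : ∀ i ∈ Finset.Icc 1 n, 0 < c i)
    (hS : S ⊆ Finset.Icc 1 n) (hS' : S' ⊆ Finset.Icc 1 n)
    (hcard : S.card < S'.card) : bcst n c S + 1 < bcst n c S' := by
  have hlb : S'.card * (2 ^ (n + 1) * (1 + ∑ j ∈ Finset.Icc 1 n, c j)) ≤ bcst n c S' := by
    refine Finset.card_nsmul_le_sum S' _ _ fun i hi => ?_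
    rw [dFull_eq (hS' hi)]
    have hci : 1 ≤ c i := hc i (hS' hi)
    have h := Nat.mul_le_mul_left (2 ^ (n + 1))
      (show 1 + ∑ j ∈ Finset.Icc 1 n, c j ≤ c i + ∑ j ∈ Finset.Icc 1 n, c j by omega)
    exact le_trans h (Nat.le_add_right _ _)
  have hsplit := bcst_split (c := c) hS
  rw [Finset.sum_add_distrib, Finset.sum_const, smul_eq_mul] at hsplit
  exact bcst_lt_key (2 ^ (n + 1)) (∑ j ∈ Finset.Icc 1 n, c j) (∑ i ∈ S, c i)
    S.card S'.card (∑ i ∈ S, 2 ^ i) _ _ hsplit (twopow_le hS)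
    (Finset.sum_le_sum_of_subset hS) hlb hcard

lemma bcst_inj {n : ℕ} {c : ℕ → ℕ} {S S' : Finset ℕ}
    (hS : S ⊆ Finset.Icc 1 n) (hS' : S' ⊆ Finset.Icc 1 n)
    (h : bcst n c S = bcst n c S') : S = S' := by
  have key : ∀ S'' : Finset ℕ, S'' ⊆ Finset.Icc 1 n →
      bcst n c S'' % 2 ^ (n + 1) = ∑ i ∈ S'', 2 ^ i := by
    intro S'' hS''
    rw [bcst_split hS'', Nat.mul_add_mod, Nat.mod_eq_of_lt (twopow_lt hS'')]
  have : ∑ i ∈ S, 2 ^ i = ∑ i ∈ S', 2 ^ i := by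
    rw [← key S hS, ← key S' hS', h]
  exact Finset.geomSum_injective le_rfl this

lemma cost_of_subset {n : ℕ} {c : ℕ → ℕ} {T : Finset ℕ} (hT : T ⊆ Finset.Icc 1 n) :
    cost n c T = bcst n c (Finset.Icc 1 n \ T) + 1 := by
  have hnT : n + 1 ∉ T := fun h => by
    have := hT h; rw [Finset.mem_Icc] at this; omega
  have hmem : n + 1 ∉ Finset.Icc 1 n \ T := by
    simp [Finset.mem_Icc]
  have hset : Finset.Icc 1 (n + 1) \ T = insert (n + 1) (Finset.Icc 1 n \ T) := by
    ext x
    simp only [Finset.mem_sdiff, Finset.mem_Icc, Finset.mem_insert]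
    constructor
    · rintro ⟨⟨h1, h2⟩, h3⟩
      rcases eq_or_ne x (n + 1) with h | h
      · exact Or.inl h
      · exact Or.inr ⟨⟨h1, by omega⟩, h3⟩
    · rintro (rfl | ⟨⟨h1, h2⟩, h3⟩)
      · exact ⟨⟨by omega, le_rfl⟩, hnT⟩
      · exact ⟨⟨h1, by omega⟩, h3⟩
  rw [cost, hset, Finset.sum_insert hmem]
  have : dFull n c (n + 1) = 1 := by simp [dFull]
  rw [this, bcst]
  omega

lemma cost_insert_top {n : ℕ} {c : ℕ → ℕ} {T : Finset ℕ} (hT : T ⊆ Finset.Icc 1 n) :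
    cost n c (insert (n + 1) T) = bcst n c (Finset.Icc 1 n \ T) := by
  have hset : Finset.Icc 1 (n + 1) \ insert (n + 1) T = Finset.Icc 1 n \ T := by
    ext x
    simp only [Finset.mem_sdiff, Finset.mem_Icc, Finset.mem_insert, not_or]
    constructor
    · rintro ⟨⟨h1, h2⟩, h3, h4⟩
      exact ⟨⟨h1, by omega⟩, h4⟩
    · rintro ⟨⟨h1, h2⟩, h3⟩
      exact ⟨⟨h1, by omega⟩, by omega, h3⟩
  rw [cost, hset]; rfl

set_option maxHeartbeats 1000000 in
theorem stmt_13 (n s k : ℕ) (c : ℕ → ℕ) (hn : 2 ≤ n)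
    (hc : ∀ i ∈ Finset.Icc 1 n, 0 < c i)
    (hs1 : 1 ≤ s) (hsn : s ≤ n - 1) (hk1 : 1 ≤ k) (hk : k ≤ n.choose s)
    (Tstar : Finset ℕ) (hTsub : Tstar ⊆ Finset.Icc 1 n) (hTcard : Tstar.card = n - s)
    (hkth : (((Finset.Icc 1 n).powerset).filter
        (fun T : Finset ℕ => T.card = n - s ∧ cost n c T ≤ cost n c Tstar)).card = k)
    (p : ℝ) (hp : p ∈ Set.Ico (1 / 2 : ℝ) (1 - 1 / (2 * (n : ℝ) + 2)))
    (hf : ffun n s p ∈ Set.Ioo ((k : ℝ) - 1 / (2 * (n : ℝ) + 2)) (k : ℝ)) :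
    ∑ R ∈ ((Finset.Icc 1 (n + 1)).powerset).filter
        (fun R : Finset ℕ => R ≠ Finset.Icc 1 (n + 1) ∧ cost n c R < cost n c Tstar),
        cap n p R
      < p ^ (n + 1) ∧
    p ^ (n + 1)
      < ∑ R ∈ ((Finset.Icc 1 (n + 1)).powerset).filter
          (fun R : Finset ℕ => R ≠ Finset.Icc 1 (n + 1) ∧ cost n c R ≤ cost n c Tstar),
          cap n p R := by
  classical
  obtain ⟨hp1, hp2⟩ := hp
  obtain ⟨hf1, hf2⟩ := hf
  have hcardG : (Finset.Icc 1 n).card = n := by rw [Nat.card_Icc]; omega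
  have hcardU : (Finset.Icc 1 (n + 1)).card = n + 1 := by rw [Nat.card_Icc]; omega
  have hnG : n + 1 ∉ Finset.Icc 1 n := by simp
  have hUG : Finset.Icc 1 (n + 1) = insert (n + 1) (Finset.Icc 1 n) := by
    ext x; simp only [Finset.mem_Icc, Finset.mem_insert]; omega
  have hcardTs : (Finset.Icc 1 n \ Tstar).card = s := by
    rw [Finset.card_sdiff_of_subset hTsub, hcardG, hTcard]; omega
  have hcardd : ∀ T : Finset ℕ, T ⊆ Finset.Icc 1 n →
      (Finset.Icc 1 n \ T).card = n - T.card := fun T hT => by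
    rw [Finset.card_sdiff_of_subset hT, hcardG]
  have hTcard_le : ∀ T : Finset ℕ, T ⊆ Finset.Icc 1 n → T.card ≤ n := fun T hT =>
    hcardG ▸ Finset.card_le_card hT
  -- characterization lemmas
  have key1 : ∀ T : Finset ℕ, T ⊆ Finset.Icc 1 n →
      (cost n c T ≤ cost n c Tstar ↔
        (n - s + 1 ≤ T.card ∨ (T.card = n - s ∧ cost n c T ≤ cost n c Tstar))) := by
    intro T hT
    constructor
    · intro h
      rcases lt_trichotomy T.card (n - s) with hlt | heq | hgt
      · exfalso
        have hbig : (Finset.Icc 1 n \ Tstar).card < (Finset.Icc 1 n \ T).card := by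
          rw [hcardd T hT, hcardTs]; have := hTcard_le T hT; omega
        have h2 := bcst_lt hc Finset.sdiff_subset Finset.sdiff_subset hbig
        rw [cost_of_subset hT, cost_of_subset hTsub] at h
        omega
      · exact Or.inr ⟨heq, h⟩
      · exact Or.inl (by omega)
    · rintro (h | ⟨h1, h2⟩)
      · have hbig : (Finset.Icc 1 n \ T).card < (Finset.Icc 1 n \ Tstar).card := by
          rw [hcardd T hT, hcardTs]; omega
        have h3 := bcst_lt hc Finset.sdiff_subset Finset.sdiff_subset hbig
        rw [cost_of_subset hT, cost_of_subset hTsub]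
        omega
      · exact h2
  have key2 : ∀ T : Finset ℕ, T ⊆ Finset.Icc 1 n →
      (cost n c T < cost n c Tstar ↔
        (n - s + 1 ≤ T.card ∨
          ((T.card = n - s ∧ cost n c T ≤ cost n c Tstar) ∧ T ≠ Tstar))) := by
    intro T hT
    constructor
    · intro h
      rcases lt_trichotomy T.card (n - s) with hlt | heq | hgt
      · exfalso
        have hbig : (Finset.Icc 1 n \ Tstar).card < (Finset.Icc 1 n \ T).card := by
          rw [hcardd T hT, hcardTs]; have := hTcard_le T hT; omega
        have h2 := bcst_lt hc Finset.sdiff_subset Finset.sdiff_subset hbig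
        rw [cost_of_subset hT, cost_of_subset hTsub] at h
        omega
      · refine Or.inr ⟨⟨heq, le_of_lt h⟩, ?_⟩
        rintro rfl; exact lt_irrefl _ h
      · exact Or.inl (by omega)
    · rintro (h | ⟨⟨h1, h2⟩, h3⟩)
      · have hbig : (Finset.Icc 1 n \ T).card < (Finset.Icc 1 n \ Tstar).card := by
          rw [hcardd T hT, hcardTs]; omega
        have h4 := bcst_lt hc Finset.sdiff_subset Finset.sdiff_subset hbig
        rw [cost_of_subset hT, cost_of_subset hTsub]
        omega
      · rw [cost_of_subset hT, cost_of_subset hTsub] at h2 ⊢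
        have hne : bcst n c (Finset.Icc 1 n \ T) ≠ bcst n c (Finset.Icc 1 n \ Tstar) := by
          intro he
          apply h3
          have h5 := bcst_inj Finset.sdiff_subset Finset.sdiff_subset he
          have h6 := congrArg (Finset.Icc 1 n \ ·) h5
          simpa [Finset.sdiff_sdiff_eq_self hT, Finset.sdiff_sdiff_eq_self hTsub] using h6
        omega
  have hparity : ∀ T : Finset ℕ, T ⊆ Finset.Icc 1 n →
      (cost n c (insert (n + 1) T) ≤ cost n c Tstar ↔ cost n c T ≤ cost n c Tstar) ∧
      (cost n c (insert (n + 1) T) < cost n c Tstar ↔ cost n c T ≤ cost n c Tstar) := by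
    intro T hT
    rw [cost_insert_top hT, cost_of_subset hT, cost_of_subset hTsub]
    have e1 := bcst_even (c := c) (Finset.sdiff_subset (s := Finset.Icc 1 n) (t := T))
    have e2 := bcst_even (c := c) (Finset.sdiff_subset (s := Finset.Icc 1 n) (t := Tstar))
    omega
  -- weight function
  set w : ℕ → ℝ := fun j => p ^ j * (1 - p) ^ (n + 1 - j) * (2 * (n : ℝ) + 1 - 2 * (j : ℝ))
    with hwdef
  have hcap : ∀ R : Finset ℕ, cap n p R = w R.card := fun R => rfl
  -- special sets
  set Pbig := (Finset.Icc 1 n).powerset.filter (fun T : Finset ℕ => n - s + 1 ≤ T.card)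
    with hPbig
  set KK := (Finset.Icc 1 n).powerset.filter
      (fun T : Finset ℕ => T.card = n - s ∧ cost n c T ≤ cost n c Tstar) with hKK
  have hKcard : KK.card = k := hkth
  have hTsK : Tstar ∈ KK := Finset.mem_filter.2 ⟨Finset.mem_powerset.2 hTsub, hTcard, le_rfl⟩
  have hGK : Finset.Icc 1 n ∉ KK := by
    intro h
    have h2 := (Finset.mem_filter.1 h).2.1
    rw [hcardG] at h2; omega
  have hGP : Finset.Icc 1 n ∈ Pbig :=
    Finset.mem_filter.2 ⟨Finset.mem_powerset.2 le_rfl, by rw [hcardG]; omega⟩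
  have hdisjPK : Disjoint Pbig KK := by
    rw [Finset.disjoint_left]
    intro T h1 h2
    have h3 := (Finset.mem_filter.1 h1).2
    have h4 := (Finset.mem_filter.1 h2).2.1
    omega
  have hdisjPK' : Disjoint (Pbig.erase (Finset.Icc 1 n)) KK :=
    hdisjPK.mono (Finset.erase_subset _ _) le_rfl
  have hKmemG : ∀ T ∈ KK, T ⊆ Finset.Icc 1 n := fun T hT =>
    Finset.mem_powerset.1 (Finset.mem_filter.1 hT).1
  have hPmemG : ∀ T ∈ Pbig, T ⊆ Finset.Icc 1 n := fun T hT =>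
    Finset.mem_powerset.1 (Finset.mem_filter.1 hT).1
  -- generic sums over Pbig and KK
  have hSB : ∀ F : ℕ → ℝ, ∑ T ∈ Pbig, F T.card
      = ∑ j ∈ Finset.Icc (n - s + 1) n, (n.choose j : ℝ) * F j := by
    intro F
    have hP : Pbig = (Finset.Icc (n - s + 1) n).biUnion
        (fun j => Finset.powersetCard j (Finset.Icc 1 n)) := by
      ext T
      simp only [hPbig, Finset.mem_filter, Finset.mem_powerset, Finset.mem_biUnion,
        Finset.mem_Icc, Finset.mem_powersetCard]
      constructor
      · rintro ⟨h1, h2⟩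
        exact ⟨T.card, ⟨h2, by have := Finset.card_le_card h1; rw [hcardG] at this; omega⟩,
          h1, rfl⟩
      · rintro ⟨j, ⟨hj1, hj2⟩, h1, h2⟩
        exact ⟨h1, by omega⟩
    rw [hP, Finset.sum_biUnion]
    · refine Finset.sum_congr rfl fun j hj => ?_
      rw [Finset.sum_congr rfl (fun T hT => by rw [(Finset.mem_powersetCard.1 hT).2]),
        Finset.sum_const, Finset.card_powersetCard, hcardG, nsmul_eq_mul]
    · intro a _ b _ hab
      simp only [Function.onFun]
      rw [Finset.disjoint_left]
      intro T h1 h2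
      rw [Finset.mem_powersetCard] at h1 h2
      exact hab (h1.2 ▸ h2.2 ▸ rfl)
  have hSK : ∀ F : ℕ → ℝ, ∑ T ∈ KK, F T.card = (k : ℝ) * F (n - s) := by
    intro F
    rw [Finset.sum_congr rfl (fun T hT => by rw [(Finset.mem_filter.1 hT).2.1]),
      Finset.sum_const, hKcard, nsmul_eq_mul]
  have hSKe : ∀ F : ℕ → ℝ, ∑ T ∈ KK.erase Tstar, F T.card = (k : ℝ) * F (n - s) - F (n - s) := by
    intro F
    have h1 : ∑ T ∈ KK.erase Tstar, F T.card + F Tstar.card = ∑ T ∈ KK, F T.card :=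
      Finset.sum_erase_add KK (fun T => F T.card) hTsK
    rw [hSK, hTcard] at h1
    linarith
  have hSBe : ∀ F : ℕ → ℝ, ∑ T ∈ Pbig.erase (Finset.Icc 1 n), F T.card
      = (∑ j ∈ Finset.Icc (n - s + 1) n, (n.choose j : ℝ) * F j) - F n := by
    intro F
    have h1 : ∑ T ∈ Pbig.erase (Finset.Icc 1 n), F T.card + F (Finset.Icc 1 n).card
        = ∑ T ∈ Pbig, F T.card :=
      Finset.sum_erase_add Pbig (fun T => F T.card) hGP
    rw [hSB, hcardG] at h1
    linarith
  -- splitting sums over the big powerset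
  have hinsne : ∀ T : Finset ℕ, T ⊆ Finset.Icc 1 n →
      (insert (n + 1) T = Finset.Icc 1 (n + 1) ↔ T = Finset.Icc 1 n) := by
    intro T hT
    have hnT : n + 1 ∉ T := fun hh => hnG (hT hh)
    constructor
    · intro h
      rw [hUG] at h
      rw [← Finset.erase_insert hnT, h, Finset.erase_insert hnG]
    · rintro rfl; exact hUG.symm
  have hneU : ∀ T : Finset ℕ, T ⊆ Finset.Icc 1 n → T ≠ Finset.Icc 1 (n + 1) := by
    intro T hT h
    have := Finset.card_le_card hT
    rw [h, hcardU, hcardG] at this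
    omega
  have sumsplit_lt : ∑ R ∈ (Finset.Icc 1 (n + 1)).powerset.filter
        (fun R : Finset ℕ => R ≠ Finset.Icc 1 (n + 1) ∧ cost n c R < cost n c Tstar), cap n p R
      = ∑ T ∈ (Finset.Icc 1 n).powerset.filter
          (fun T : Finset ℕ => T ≠ Finset.Icc 1 (n + 1) ∧ cost n c T < cost n c Tstar), w T.card
        + ∑ T ∈ (Finset.Icc 1 n).powerset.filter
            (fun T : Finset ℕ => insert (n + 1) T ≠ Finset.Icc 1 (n + 1)
              ∧ cost n c (insert (n + 1) T) < cost n c Tstar),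
            w (T.card + 1) := by
    have hdisjPow : Disjoint (((Finset.Icc 1 n).powerset).filter
          (fun R : Finset ℕ => R ≠ Finset.Icc 1 (n + 1) ∧ cost n c R < cost n c Tstar))
        ((((Finset.Icc 1 n).powerset).image (insert (n + 1))).filter
          (fun R : Finset ℕ => R ≠ Finset.Icc 1 (n + 1) ∧ cost n c R < cost n c Tstar)) := by
      refine Finset.disjoint_left.2 fun T h1 h2 => ?_
      obtain ⟨T', _, rfl⟩ := Finset.mem_image.1 (Finset.mem_filter.1 h2).1
      exact hnG (Finset.mem_powerset.1 (Finset.mem_filter.1 h1).1 (Finset.mem_insert_self _ _))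
    rw [congrArg Finset.powerset hUG, Finset.powerset_insert, Finset.filter_union,
      Finset.sum_union hdisjPow,
      Finset.filter_image, Finset.sum_image]
    · have e1 : ∑ T ∈ (Finset.Icc 1 n).powerset.filter
            (fun T : Finset ℕ => T ≠ Finset.Icc 1 (n + 1) ∧ cost n c T < cost n c Tstar),
            cap n p T
          = ∑ T ∈ (Finset.Icc 1 n).powerset.filter
            (fun T : Finset ℕ => T ≠ Finset.Icc 1 (n + 1) ∧ cost n c T < cost n c Tstar),
            w T.card :=
        Finset.sum_congr rfl fun T _ => hcap T
      have e2 : ∑ T ∈ (Finset.Icc 1 n).powerset.filter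
            (fun T : Finset ℕ => insert (n + 1) T ≠ Finset.Icc 1 (n + 1)
              ∧ cost n c (insert (n + 1) T) < cost n c Tstar),
            cap n p (insert (n + 1) T)
          = ∑ T ∈ (Finset.Icc 1 n).powerset.filter
            (fun T : Finset ℕ => insert (n + 1) T ≠ Finset.Icc 1 (n + 1)
              ∧ cost n c (insert (n + 1) T) < cost n c Tstar),
            w (T.card + 1) := by
        refine Finset.sum_congr rfl fun T hT => ?_
        have hnT : n + 1 ∉ T := fun hh =>
          hnG (Finset.mem_powerset.1 (Finset.mem_filter.1 hT).1 hh)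
        rw [hcap, Finset.card_insert_of_notMem hnT]
      exact congrArg₂ (· + ·) e1 e2
    · intro x hx y hy hxy
      have hx' : n + 1 ∉ x := fun h =>
        hnG (Finset.mem_powerset.1 (Finset.mem_filter.1 hx).1 h)
      have hy' : n + 1 ∉ y := fun h =>
        hnG (Finset.mem_powerset.1 (Finset.mem_filter.1 hy).1 h)
      rw [← Finset.erase_insert hx', ← Finset.erase_insert hy', hxy]
  have sumsplit_le : ∑ R ∈ (Finset.Icc 1 (n + 1)).powerset.filter
        (fun R : Finset ℕ => R ≠ Finset.Icc 1 (n + 1) ∧ cost n c R ≤ cost n c Tstar), cap n p R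
      = ∑ T ∈ (Finset.Icc 1 n).powerset.filter
          (fun T : Finset ℕ => T ≠ Finset.Icc 1 (n + 1) ∧ cost n c T ≤ cost n c Tstar), w T.card
        + ∑ T ∈ (Finset.Icc 1 n).powerset.filter
            (fun T : Finset ℕ => insert (n + 1) T ≠ Finset.Icc 1 (n + 1)
              ∧ cost n c (insert (n + 1) T) ≤ cost n c Tstar),
            w (T.card + 1) := by
    have hdisjPow : Disjoint (((Finset.Icc 1 n).powerset).filter
          (fun R : Finset ℕ => R ≠ Finset.Icc 1 (n + 1) ∧ cost n c R ≤ cost n c Tstar))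
        ((((Finset.Icc 1 n).powerset).image (insert (n + 1))).filter
          (fun R : Finset ℕ => R ≠ Finset.Icc 1 (n + 1) ∧ cost n c R ≤ cost n c Tstar)) := by
      refine Finset.disjoint_left.2 fun T h1 h2 => ?_
      obtain ⟨T', _, rfl⟩ := Finset.mem_image.1 (Finset.mem_filter.1 h2).1
      exact hnG (Finset.mem_powerset.1 (Finset.mem_filter.1 h1).1 (Finset.mem_insert_self _ _))
    rw [congrArg Finset.powerset hUG, Finset.powerset_insert, Finset.filter_union,
      Finset.sum_union hdisjPow,
      Finset.filter_image, Finset.sum_image]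
    · have e1 : ∑ T ∈ (Finset.Icc 1 n).powerset.filter
            (fun T : Finset ℕ => T ≠ Finset.Icc 1 (n + 1) ∧ cost n c T ≤ cost n c Tstar),
            cap n p T
          = ∑ T ∈ (Finset.Icc 1 n).powerset.filter
            (fun T : Finset ℕ => T ≠ Finset.Icc 1 (n + 1) ∧ cost n c T ≤ cost n c Tstar),
            w T.card :=
        Finset.sum_congr rfl fun T _ => hcap T
      have e2 : ∑ T ∈ (Finset.Icc 1 n).powerset.filter
            (fun T : Finset ℕ => insert (n + 1) T ≠ Finset.Icc 1 (n + 1)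
              ∧ cost n c (insert (n + 1) T) ≤ cost n c Tstar),
            cap n p (insert (n + 1) T)
          = ∑ T ∈ (Finset.Icc 1 n).powerset.filter
            (fun T : Finset ℕ => insert (n + 1) T ≠ Finset.Icc 1 (n + 1)
              ∧ cost n c (insert (n + 1) T) ≤ cost n c Tstar),
            w (T.card + 1) := by
        refine Finset.sum_congr rfl fun T hT => ?_
        have hnT : n + 1 ∉ T := fun hh =>
          hnG (Finset.mem_powerset.1 (Finset.mem_filter.1 hT).1 hh)
        rw [hcap, Finset.card_insert_of_notMem hnT]
      exact congrArg₂ (· + ·) e1 e2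
    · intro x hx y hy hxy
      have hx' : n + 1 ∉ x := fun h =>
        hnG (Finset.mem_powerset.1 (Finset.mem_filter.1 hx).1 h)
      have hy' : n + 1 ∉ y := fun h =>
        hnG (Finset.mem_powerset.1 (Finset.mem_filter.1 hy).1 h)
      rw [← Finset.erase_insert hx', ← Finset.erase_insert hy', hxy]
  -- identify the four filtered sets
  have hflt0 : (Finset.Icc 1 n).powerset.filter
      (fun T : Finset ℕ => T ≠ Finset.Icc 1 (n + 1) ∧ cost n c T < cost n c Tstar)
      = Pbig ∪ KK.erase Tstar := by
    rw [Finset.filter_congr (q := fun T : Finset ℕ => n - s + 1 ≤ T.card ∨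
        ((T.card = n - s ∧ cost n c T ≤ cost n c Tstar) ∧ T ≠ Tstar))
      (fun T hT => by
        rw [Finset.mem_powerset] at hT
        constructor
        · rintro ⟨h1, h2⟩; exact (key2 T hT).1 h2
        · intro h; exact ⟨hneU T hT, (key2 T hT).2 h⟩)]
    rw [Finset.filter_or, hPbig, hKK, ← Finset.filter_filter, Finset.filter_ne']
  have hfle0 : (Finset.Icc 1 n).powerset.filter
      (fun T : Finset ℕ => T ≠ Finset.Icc 1 (n + 1) ∧ cost n c T ≤ cost n c Tstar)
      = Pbig ∪ KK := by
    rw [Finset.filter_congr (q := fun T : Finset ℕ => n - s + 1 ≤ T.card ∨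
        (T.card = n - s ∧ cost n c T ≤ cost n c Tstar))
      (fun T hT => by
        rw [Finset.mem_powerset] at hT
        constructor
        · rintro ⟨h1, h2⟩; exact (key1 T hT).1 h2
        · intro h; exact ⟨hneU T hT, (key1 T hT).2 h⟩)]
    rw [Finset.filter_or, hPbig, hKK]
  have hfl1 : ∀ cmp : ℕ → ℕ → Prop, (∀ a b : ℕ, (cmp a b ↔ a < b) ∨ (cmp a b ↔ a ≤ b)) →
      True := fun _ _ => trivial
  have hflt1 : (Finset.Icc 1 n).powerset.filter
      (fun T : Finset ℕ => insert (n + 1) T ≠ Finset.Icc 1 (n + 1)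
        ∧ cost n c (insert (n + 1) T) < cost n c Tstar)
      = Pbig.erase (Finset.Icc 1 n) ∪ KK := by
    rw [Finset.filter_congr (q := fun T : Finset ℕ => (n - s + 1 ≤ T.card ∨
        (T.card = n - s ∧ cost n c T ≤ cost n c Tstar)) ∧ T ≠ Finset.Icc 1 n)
      (fun T hT => by
        rw [Finset.mem_powerset] at hT
        constructor
        · rintro ⟨h1, h2⟩
          exact ⟨(key1 T hT).1 (((hparity T hT).2).mp h2),
            fun he => h1 ((hinsne T hT).2 he)⟩
        · rintro ⟨h1, h2⟩
          exact ⟨fun he => h2 ((hinsne T hT).1 he),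
            ((hparity T hT).2).mpr ((key1 T hT).2 h1)⟩)]
    rw [← Finset.filter_filter, Finset.filter_or, hPbig, hKK, Finset.filter_ne',
      Finset.erase_union_distrib, Finset.erase_eq_of_notMem hGK]
  have hfle1 : (Finset.Icc 1 n).powerset.filter
      (fun T : Finset ℕ => insert (n + 1) T ≠ Finset.Icc 1 (n + 1)
        ∧ cost n c (insert (n + 1) T) ≤ cost n c Tstar)
      = Pbig.erase (Finset.Icc 1 n) ∪ KK := by
    rw [Finset.filter_congr (q := fun T : Finset ℕ => (n - s + 1 ≤ T.card ∨
        (T.card = n - s ∧ cost n c T ≤ cost n c Tstar)) ∧ T ≠ Finset.Icc 1 n)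
      (fun T hT => by
        rw [Finset.mem_powerset] at hT
        constructor
        · rintro ⟨h1, h2⟩
          exact ⟨(key1 T hT).1 (((hparity T hT).1).mp h2),
            fun he => h1 ((hinsne T hT).2 he)⟩
        · rintro ⟨h1, h2⟩
          exact ⟨fun he => h2 ((hinsne T hT).1 he),
            ((hparity T hT).1).mpr ((key1 T hT).2 h1)⟩)]
    rw [← Finset.filter_filter, Finset.filter_or, hPbig, hKK, Finset.filter_ne',
      Finset.erase_union_distrib, Finset.erase_eq_of_notMem hGK]
  -- the two grand sums
  have hsum_lt : ∑ R ∈ ((Finset.Icc 1 (n + 1)).powerset).filter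
        (fun R : Finset ℕ => R ≠ Finset.Icc 1 (n + 1) ∧ cost n c R < cost n c Tstar),
        cap n p R
      = ((∑ j ∈ Finset.Icc (n - s + 1) n, (n.choose j : ℝ) * w j)
          + ((k : ℝ) * w (n - s) - w (n - s)))
        + (((∑ j ∈ Finset.Icc (n - s + 1) n, (n.choose j : ℝ) * w (j + 1)) - w (n + 1))
          + (k : ℝ) * w (n - s + 1)) := by
    rw [sumsplit_lt, hflt0, hflt1, Finset.sum_union (hdisjPK.mono le_rfl
      (Finset.erase_subset _ _)), Finset.sum_union hdisjPK',
      hSB, hSKe, hSBe (fun j => w (j + 1)), hSK (fun j => w (j + 1))]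
  have hsum_le : ∑ R ∈ ((Finset.Icc 1 (n + 1)).powerset).filter
        (fun R : Finset ℕ => R ≠ Finset.Icc 1 (n + 1) ∧ cost n c R ≤ cost n c Tstar),
        cap n p R
      = ((∑ j ∈ Finset.Icc (n - s + 1) n, (n.choose j : ℝ) * w j)
          + (k : ℝ) * w (n - s))
        + (((∑ j ∈ Finset.Icc (n - s + 1) n, (n.choose j : ℝ) * w (j + 1)) - w (n + 1))
          + (k : ℝ) * w (n - s + 1)) := by
    rw [sumsplit_le, hfle0, hfle1, Finset.sum_union hdisjPK, Finset.sum_union hdisjPK',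
      hSB, hSK, hSBe (fun j => w (j + 1)), hSK (fun j => w (j + 1))]
  -- numeric identities
  have hsle : s ≤ n := by omega
  have hwtop : w (n + 1) = -p ^ (n + 1) := by
    simp only [hwdef]
    rw [Nat.sub_self]
    push_cast
    ring
  have hNN : (∑ j ∈ Finset.Icc (n - s + 1) n, (n.choose j : ℝ) * w j)
      + (∑ j ∈ Finset.Icc (n - s + 1) n, (n.choose j : ℝ) * w (j + 1))
      = -(∑ i ∈ Finset.Icc (n - s + 1) n,
          (n.choose i : ℝ) * p ^ i * (1 - p) ^ (n - i) * (2 * ((i : ℝ) + p - n) - 1)) := by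
    rw [← Finset.sum_add_distrib, ← Finset.sum_neg_distrib]
    refine Finset.sum_congr rfl fun j hj => ?_
    rw [Finset.mem_Icc] at hj
    simp only [hwdef]
    have e1 : n + 1 - j = (n - j) + 1 := by omega
    have e2 : n + 1 - (j + 1) = n - j := by omega
    rw [e1, e2, pow_succ (1 - p) (n - j), pow_succ p j]
    push_cast
    ring
  have hDD : w (n - s) + w (n - s + 1)
      = p ^ (n - s) * (1 - p) ^ s * (2 * (s : ℝ) - 2 * p + 1) := by
    simp only [hwdef]
    have e1 : n + 1 - (n - s) = s + 1 := by omega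
    have e2 : n + 1 - (n - s + 1) = s := by omega
    rw [e1, e2, pow_succ (1 - p) s, pow_succ p (n - s)]
    push_cast [Nat.cast_sub hsle]
    ring
  have hwns : w (n - s) = p ^ (n - s) * (1 - p) ^ s * ((1 - p) * (2 * (s : ℝ) + 1)) := by
    simp only [hwdef]
    have e1 : n + 1 - (n - s) = s + 1 := by omega
    rw [e1, pow_succ (1 - p) s]
    push_cast [Nat.cast_sub hsle]
    ring
  -- real-number facts
  have hn2 : (2 : ℝ) ≤ (n : ℝ) := by exact_mod_cast hn
  have hε : (0 : ℝ) < 1 / (2 * (n : ℝ) + 2) := by positivity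
  have hp0 : (0 : ℝ) < p := lt_of_lt_of_le (by norm_num) hp1
  have h1p : (0 : ℝ) < 1 - p := by
    have : p < 1 := by linarith
    linarith
  have hs' : (1 : ℝ) ≤ (s : ℝ) := by exact_mod_cast hs1
  have hB0 : (0 : ℝ) < p ^ (n - s) * (1 - p) ^ s := by positivity
  have hDDpos : (0 : ℝ) < p ^ (n - s) * (1 - p) ^ s * (2 * (s : ℝ) - 2 * p + 1) := by
    apply mul_pos hB0
    nlinarith
  rw [ffun] at hf1 hf2
  have hnum_lt : (∑ i ∈ Finset.Icc (n - s + 1) n,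
      (n.choose i : ℝ) * p ^ i * (1 - p) ^ (n - i) * (2 * ((i : ℝ) + p - n) - 1))
      < (k : ℝ) * (p ^ (n - s) * (1 - p) ^ s * (2 * (s : ℝ) - 2 * p + 1)) :=
    (div_lt_iff₀ hDDpos).1 hf2
  have hnum_gt : ((k : ℝ) - 1 / (2 * (n : ℝ) + 2))
        * (p ^ (n - s) * (1 - p) ^ s * (2 * (s : ℝ) - 2 * p + 1))
      < ∑ i ∈ Finset.Icc (n - s + 1) n,
        (n.choose i : ℝ) * p ^ i * (1 - p) ^ (n - i) * (2 * ((i : ℝ) + p - n) - 1) :=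
    (lt_div_iff₀ hDDpos).1 hf1
  have hstep : 1 / (2 * (n : ℝ) + 2)
        * (p ^ (n - s) * (1 - p) ^ s * (2 * (s : ℝ) - 2 * p + 1)) ≤ w (n - s) := by
    rw [hwns]
    have hq1 : (0 : ℝ) ≤ 1 - p - 1 / (2 * (n : ℝ) + 2) := by linarith
    have hfact : 1 / (2 * (n : ℝ) + 2) * (2 * (s : ℝ) - 2 * p + 1)
        ≤ (1 - p) * (2 * (s : ℝ) + 1) := by
      nlinarith only [mul_nonneg hq1 (by linarith : (0:ℝ) ≤ 2 * (s : ℝ) + 1),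
        mul_nonneg hp0.le hε.le]
    linarith only [mul_le_mul_of_nonneg_left hfact hB0.le]
  have hkDD : (k : ℝ) * w (n - s) + (k : ℝ) * w (n - s + 1)
      = (k : ℝ) * (p ^ (n - s) * (1 - p) ^ s * (2 * (s : ℝ) - 2 * p + 1)) := by
    rw [← mul_add, hDD]
  constructor
  · rw [hsum_lt, hwtop]
    linarith only [hnum_gt, hstep, hNN, hkDD]
  · rw [hsum_le, hwtop]
    linarith only [hnum_lt, hNN, hkDD]
end

section
/- Let n ≥ 2, let c_1,…,c_n be positive integers, define d_i = 2^{n+1}·(c_i + Σ_{j=1}^n c_j) + 2^i for i ∈ [n] and d_{n+1} = 1, and let cost(R) = Σ_{i∈[n+1]∖R} d_i for R ⊆ [n+1]. Let S ⊆ [n] be nonempty with S ≠ [n], let T* ⊆ [n] with |T*| = n − |S|, and define u(R) = max{ cost(T*) − cost(R), 0 } for R ⊆ [n+1]. Let S^c = [n] ∖ S. Then u(S^c ∪ {n+1}) − u(S^c) = 1 if lexr_𝔠(S) ≤ lexr_𝔠([n] ∖ T*), and u(S^c ∪ {n+1}) − u(S^c) = 0 otherwise, where 𝔠 = (c_1,…,c_n).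 -/
open Finset
open scoped BigOperators Classical

/-- `u(R) = max{ cost(T*) − cost(R), 0 }`. -/
noncomputable def uFun (n : ℕ) (c : ℕ → ℕ) (Tstar R : Finset ℕ) : ℝ :=
  max ((cost n c Tstar : ℝ) - (cost n c R : ℝ)) 0

/-- `S' ≤_lex S`: either `S' = S` or the largest element of the symmetric
difference `S' △ S` lies in `S`. -/
def lexLe (S' S : Finset ℕ) : Prop :=
  S' = S ∨ ∃ m ∈ (S' \ S) ∪ (S \ S'), m ∈ S ∧ ∀ b ∈ (S' \ S) ∪ (S \ S'), b ≤ m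

/-- The lexicographic rank of `S` among the subsets of `ground`, with respect to the
weights `c`. -/
noncomputable def lexrank (c : ℕ → ℕ) (ground S : Finset ℕ) : ℕ :=
  (ground.powerset.filter (fun S' : Finset ℕ =>
    S'.card = S.card ∧
      (∑ i ∈ S', c i < ∑ i ∈ S, c i ∨
        (∑ i ∈ S', c i = ∑ i ∈ S, c i ∧ lexLe S' S)))).card


lemma sum_range_two_pow_lt (m : ℕ) : ∑ i ∈ Finset.range m, 2^i < 2^m := by
  induction m with
  | zero => simp
  | succ k ih =>
    rw [Finset.sum_range_succ, pow_succ]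
    omega

lemma sum_two_pow_lt {A : Finset ℕ} {m : ℕ} (h : ∀ a ∈ A, a < m) :
    ∑ i ∈ A, 2^i < 2^m := by
  calc ∑ i ∈ A, 2^i ≤ ∑ i ∈ Finset.range m, 2^i :=
        Finset.sum_le_sum_of_subset (fun a ha => Finset.mem_range.mpr (h a ha))
    _ < 2^m := sum_range_two_pow_lt m

lemma sum_two_pow_lt_of_max {A B : Finset ℕ} {m : ℕ} (hmB : m ∈ B) (hmA : m ∉ A)
    (hmax : ∀ b ∈ (A \ B) ∪ (B \ A), b ≤ m) :
    ∑ i ∈ A, (2:ℕ)^i < ∑ i ∈ B, 2^i := by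
  have h1 : ∑ i ∈ A \ B, (2:ℕ)^i < 2^m := by
    apply sum_two_pow_lt
    intro a ha
    have h2 := hmax a (Finset.mem_union_left _ ha)
    have h3 : a ≠ m := fun h => hmA (h ▸ (Finset.mem_sdiff.mp ha).1)
    omega
  have h2 : (2:ℕ)^m ≤ ∑ i ∈ B \ A, 2^i :=
    Finset.single_le_sum (fun i _ => Nat.zero_le _)
      (Finset.mem_sdiff.mpr ⟨hmB, hmA⟩)
  have hA : ∑ i ∈ A ∩ B, (2:ℕ)^i + ∑ i ∈ A \ B, 2^i = ∑ i ∈ A, 2^i :=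
    Finset.sum_inter_add_sum_sdiff A B _
  have hB : ∑ i ∈ B ∩ A, (2:ℕ)^i + ∑ i ∈ B \ A, 2^i = ∑ i ∈ B, 2^i :=
    Finset.sum_inter_add_sum_sdiff B A _
  rw [Finset.inter_comm] at hB
  omega

lemma lexLe_iff (A B : Finset ℕ) : lexLe A B ↔ ∑ i ∈ A, (2:ℕ)^i ≤ ∑ i ∈ B, 2^i := by
  constructor
  · rintro (rfl | ⟨m, hm, hmB, hmax⟩)
    · exact le_rfl
    · have hmA : m ∉ A := by
        rcases Finset.mem_union.mp hm with h | h
        · exact absurd hmB (Finset.mem_sdiff.mp h).2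
        · exact (Finset.mem_sdiff.mp h).2
      exact (sum_two_pow_lt_of_max hmB hmA hmax).le
  · intro h
    by_cases hAB : A = B
    · exact Or.inl hAB
    · have hne : ((A \ B) ∪ (B \ A)).Nonempty := by
        rw [Finset.nonempty_iff_ne_empty]
        intro hemp
        apply hAB
        have h1 : A \ B = ∅ := by
          have := Finset.union_eq_empty.mp hemp; exact this.1
        have h2 : B \ A = ∅ := (Finset.union_eq_empty.mp hemp).2
        exact Finset.Subset.antisymm (Finset.sdiff_eq_empty_iff_subset.mp h1)
          (Finset.sdiff_eq_empty_iff_subset.mp h2)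
      set m := ((A \ B) ∪ (B \ A)).max' hne with hm
      have hmmem := ((A \ B) ∪ (B \ A)).max'_mem hne
      have hmax : ∀ b ∈ (A \ B) ∪ (B \ A), b ≤ m := fun b hb => Finset.le_max' _ b hb
      rcases Finset.mem_union.mp hmmem with hmem | hmem
      · exfalso
        have := sum_two_pow_lt_of_max (A := B) (B := A)
          (Finset.mem_sdiff.mp hmem).1 (Finset.mem_sdiff.mp hmem).2
          (by intro b hb; apply hmax; rw [Finset.union_comm]; exact hb)
        omega
      · exact Or.inr ⟨m, hmmem, (Finset.mem_sdiff.mp hmem).1, hmax⟩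


def keyLe (c : ℕ → ℕ) (A B : Finset ℕ) : Prop :=
  ∑ i ∈ A, c i < ∑ i ∈ B, c i ∨
    (∑ i ∈ A, c i = ∑ i ∈ B, c i ∧ ∑ i ∈ A, (2:ℕ)^i ≤ ∑ i ∈ B, 2^i)

lemma base_compare {M a b r s : ℕ} (hr : r < M) (hs : s < M) :
    M*a + r ≤ M*b + s ↔ (a < b ∨ (a = b ∧ r ≤ s)) := by
  constructor
  · intro h
    rcases lt_trichotomy a b with h' | h' | h'
    · exact Or.inl h'
    · subst h'; right; exact ⟨rfl, by omega⟩
    · exfalso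
      have h2 : M * (b + 1) ≤ M * a := Nat.mul_le_mul_left M h'
      rw [Nat.mul_add, Nat.mul_one] at h2
      omega
  · rintro (h | ⟨rfl, h⟩)
    · have h2 : M * (a + 1) ≤ M * b := Nat.mul_le_mul_left M h
      rw [Nat.mul_add, Nat.mul_one] at h2
      omega
    · omega

lemma sum_d_eq (n : ℕ) (c : ℕ → ℕ) {A : Finset ℕ} (hA : A ⊆ Finset.Icc 1 n) :
    ∑ i ∈ A, dFull n c i
      = 2^(n+1) * (∑ i ∈ A, c i + A.card * ∑ j ∈ Finset.Icc 1 n, c j)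
          + ∑ i ∈ A, 2^i := by
  have h1 : ∀ i ∈ A, dFull n c i
      = 2^(n+1) * c i + 2^(n+1) * ∑ j ∈ Finset.Icc 1 n, c j + 2^i := by
    intro i hi
    have h2 : i ≤ n := (Finset.mem_Icc.mp (hA hi)).2
    simp only [dFull, if_neg (by omega : i ≠ n + 1)]
    ring
  rw [Finset.sum_congr rfl h1]
  simp only [Finset.sum_add_distrib, ← Finset.mul_sum, Finset.sum_const, smul_eq_mul]
  ring

lemma sum_d_le_iff (n : ℕ) (c : ℕ → ℕ) {A B : Finset ℕ}
    (hA : A ⊆ Finset.Icc 1 n) (hB : B ⊆ Finset.Icc 1 n) (hcard : A.card = B.card) :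
    (∑ i ∈ A, dFull n c i ≤ ∑ i ∈ B, dFull n c i) ↔ keyLe c A B := by
  rw [sum_d_eq n c hA, sum_d_eq n c hB]
  have hrA : ∑ i ∈ A, (2:ℕ)^i < 2^(n+1) :=
    sum_two_pow_lt (fun a ha => by have := (Finset.mem_Icc.mp (hA ha)).2; omega)
  have hrB : ∑ i ∈ B, (2:ℕ)^i < 2^(n+1) :=
    sum_two_pow_lt (fun a ha => by have := (Finset.mem_Icc.mp (hB ha)).2; omega)
  rw [base_compare hrA hrB]
  unfold keyLe
  rw [hcard]
  omega


lemma lexrank_eq (c : ℕ → ℕ) (G X : Finset ℕ) :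
    lexrank c G X = (G.powerset.filter (fun S' : Finset ℕ =>
      S'.card = X.card ∧ keyLe c S' X)).card := by
  unfold lexrank keyLe
  congr 1
  ext S'
  simp only [Finset.mem_filter, lexLe_iff]

lemma keyLe_refl (c : ℕ → ℕ) (A : Finset ℕ) : keyLe c A A := by
  unfold keyLe; omega

lemma keyLe_trans (c : ℕ → ℕ) {A B C : Finset ℕ}
    (h1 : keyLe c A B) (h2 : keyLe c B C) : keyLe c A C := by
  unfold keyLe at *; omega

lemma keyLe_total (c : ℕ → ℕ) (A B : Finset ℕ) : keyLe c A B ∨ keyLe c B A := by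
  unfold keyLe; omega

lemma lexrank_le_iff (c : ℕ → ℕ) {G S T : Finset ℕ} (hS : S ⊆ G) (hT : T ⊆ G)
    (hcard : S.card = T.card) :
    lexrank c G S ≤ lexrank c G T ↔ keyLe c S T := by
  rw [lexrank_eq, lexrank_eq]
  constructor
  · intro h
    by_contra hnot
    have hTS : keyLe c T S := (keyLe_total c S T).resolve_left hnot
    have hsub : (G.powerset.filter (fun S' : Finset ℕ => S'.card = T.card ∧ keyLe c S' T))
        ⊆ (G.powerset.filter (fun S' : Finset ℕ => S'.card = S.card ∧ keyLe c S' S)) := by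
      intro S' hS'
      rw [Finset.mem_filter] at *
      exact ⟨hS'.1, hcard ▸ hS'.2.1, keyLe_trans c hS'.2.2 hTS⟩
    have hSmem : S ∈ (G.powerset.filter
        (fun S' : Finset ℕ => S'.card = S.card ∧ keyLe c S' S)) :=
      Finset.mem_filter.mpr ⟨Finset.mem_powerset.mpr hS, rfl, keyLe_refl c S⟩
    have hSnot : S ∉ (G.powerset.filter
        (fun S' : Finset ℕ => S'.card = T.card ∧ keyLe c S' T)) := by
      intro hmem
      exact hnot (Finset.mem_filter.mp hmem).2.2
    have := Finset.card_lt_card (Finset.ssubset_iff_of_subset hsub |>.mpr ⟨S, hSmem, hSnot⟩)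
    omega
  · intro hST
    apply Finset.card_le_card
    intro S' hS'
    rw [Finset.mem_filter] at *
    exact ⟨hS'.1, hcard ▸ hS'.2.1, keyLe_trans c hS'.2.2 hST⟩


theorem stmt_14 (n : ℕ) (hn : 2 ≤ n) (c : ℕ → ℕ)
    (hc : ∀ i ∈ Finset.Icc 1 n, 0 < c i)
    (S : Finset ℕ) (hSsub : S ⊆ Finset.Icc 1 n) (hSne : S.Nonempty)
    (hSproper : S ≠ Finset.Icc 1 n)
    (Tstar : Finset ℕ) (hTsub : Tstar ⊆ Finset.Icc 1 n)
    (hTcard : Tstar.card = n - S.card) :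
    uFun n c Tstar (insert (n + 1) (Finset.Icc 1 n \ S))
        - uFun n c Tstar (Finset.Icc 1 n \ S)
      = if lexrank c (Finset.Icc 1 n) S
            ≤ lexrank c (Finset.Icc 1 n) (Finset.Icc 1 n \ Tstar)
        then 1 else 0 := by
  classical
  set G := Finset.Icc 1 n with hG
  have hnG : n + 1 ∉ G := by simp [hG, Finset.mem_Icc]
  have hScard : S.card ≤ n := by
    have := Finset.card_le_card hSsub
    simpa [hG, Nat.card_Icc] using this
  set T : Finset ℕ := G \ Tstar with hT
  have hTsubG : T ⊆ G := Finset.sdiff_subset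
  have hTcard' : T.card = S.card := by
    rw [hT, Finset.card_sdiff_of_subset hTsub, hTcard]
    have : G.card = n := by simp [hG, Nat.card_Icc]
    omega
  have hnT : n + 1 ∉ Tstar := fun h => by
    have := (Finset.mem_Icc.mp (hTsub h)).2; omega
  have hset1 : Finset.Icc 1 (n + 1) \ Tstar = insert (n + 1) T := by
    ext x
    simp only [Finset.mem_sdiff, Finset.mem_Icc, Finset.mem_insert, hT, hG]
    constructor
    · rintro ⟨⟨h1, h2⟩, h3⟩
      by_cases hx' : x = n + 1
      · exact Or.inl hx'
      · exact Or.inr ⟨⟨h1, by omega⟩, h3⟩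
    · rintro (rfl | ⟨⟨h1, h2⟩, h3⟩)
      · exact ⟨⟨by omega, le_rfl⟩, hnT⟩
      · exact ⟨⟨h1, by omega⟩, h3⟩
  have hset2 : Finset.Icc 1 (n + 1) \ (G \ S) = insert (n + 1) S := by
    ext x
    simp only [Finset.mem_sdiff, Finset.mem_Icc, Finset.mem_insert, hG,
      not_and, not_not]
    constructor
    · rintro ⟨⟨h1, h2⟩, h3⟩
      by_cases hx' : x = n + 1
      · exact Or.inl hx'
      · exact Or.inr (h3 ⟨h1, by omega⟩)
    · rintro (rfl | hxS)
      · exact ⟨⟨by omega, le_rfl⟩, fun h => absurd h.2 (by omega)⟩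
      · have := Finset.mem_Icc.mp (hSsub hxS)
        exact ⟨⟨this.1, by omega⟩, fun _ => hxS⟩
  have hset3 : Finset.Icc 1 (n + 1) \ insert (n + 1) (G \ S) = S := by
    ext x
    simp only [Finset.mem_sdiff, Finset.mem_Icc, Finset.mem_insert, hG,
      not_or, not_and, not_not]
    constructor
    · rintro ⟨⟨h1, h2⟩, h3, h4⟩
      exact h4 ⟨h1, by omega⟩
    · intro hxS
      have := Finset.mem_Icc.mp (hSsub hxS)
      exact ⟨⟨this.1, by omega⟩, by omega, fun _ => hxS⟩
  have hd1 : dFull n c (n + 1) = 1 := by simp [dFull]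
  have hnS : n + 1 ∉ S := fun h => hnG (hSsub h)
  have hnT' : n + 1 ∉ T := fun h => hnG (hTsubG h)
  have hc1 : cost n c Tstar = ∑ i ∈ T, dFull n c i + 1 := by
    unfold cost
    rw [hset1, Finset.sum_insert hnT', hd1]
    omega
  have hc2 : cost n c (G \ S) = ∑ i ∈ S, dFull n c i + 1 := by
    unfold cost
    rw [hset2, Finset.sum_insert hnS, hd1]
    omega
  have hc3 : cost n c (insert (n + 1) (G \ S)) = ∑ i ∈ S, dFull n c i := by
    unfold cost
    rw [hset3]
  have hrank : (lexrank c G S ≤ lexrank c G T)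
      ↔ ∑ i ∈ S, dFull n c i ≤ ∑ i ∈ T, dFull n c i :=
    (lexrank_le_iff c hSsub hTsubG hTcard'.symm).trans
      (sum_d_le_iff n c hSsub hTsubG hTcard'.symm).symm
  set a := ∑ i ∈ T, dFull n c i with ha
  set b := ∑ i ∈ S, dFull n c i with hb
  simp only [uFun, hc1, hc2, hc3]
  by_cases hba : b ≤ a
  · rw [if_pos (hrank.mpr hba)]
    have h1 : (b : ℝ) ≤ (a : ℝ) := Nat.cast_le.mpr hba
    push_cast
    rw [max_eq_left (by linarith), max_eq_left (by linarith)]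
    ring
  · rw [if_neg (fun hh => hba (hrank.mp hh))]
    have h1 : (a : ℝ) + 1 ≤ (b : ℝ) := by
      have : a + 1 ≤ b := by omega
      exact_mod_cast this
    push_cast
    rw [max_eq_right (by linarith), max_eq_right (by linarith)]
    ring
end
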